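/- Let v̂ ∈ ℝ^d be a unit vector, U a d×k matrix with orthonormal columns, A_n a d×d matrix with ‖A_n‖ ≤ 1, and γ_n > 0. Define Z_n = 2γ_n (v̂ᵀ U Uᵀ A_n v̂ − ‖Uᵀ v̂‖² v̂ᵀ A_n v̂) and Φ = 1 − ‖Uᵀ v̂‖². Then |Z_n| ≤ 2 γ_n √Φ. -/

import Mathlib

open Matrix

/-- Euclidean norm of a vector in `ℝ^n`. -/
noncomputable def vecEnorm {n : ℕ} (v : Fin n → ℝ) : ℝ :=
  Real.sqrt (∑ i, v i ^ 2)

/-- Spectral norm of a real matrix. -/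
noncomputable def spec {m n : ℕ} (M : Matrix (Fin m) (Fin n) ℝ) : ℝ :=
  ‖LinearMap.toContinuousLinearMap (Matrix.toEuclideanLin M)‖

lemma enorm_eq_norm {n : ℕ} (v : Fin n → ℝ) :
    vecEnorm v = ‖(WithLp.equiv 2 (Fin n → ℝ)).symm v‖ := by
  rw [EuclideanSpace.norm_eq, vecEnorm]
  congr 1; apply Finset.sum_congr rfl; intro i _
  simp [sq_abs]

lemma my_enorm_nonneg {n : ℕ} (v : Fin n → ℝ) : 0 ≤ vecEnorm v :=
  Real.sqrt_nonneg _

lemma enorm_sq {n : ℕ} (v : Fin n → ℝ) : vecEnorm v ^ 2 = v ⬝ᵥ v := by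
  rw [vecEnorm, Real.sq_sqrt (Finset.sum_nonneg fun i _ => sq_nonneg _)]
  simp [dotProduct, sq]

lemma abs_dot_le {n : ℕ} (a b : Fin n → ℝ) : |a ⬝ᵥ b| ≤ vecEnorm a * vecEnorm b := by
  have h := abs_real_inner_le_norm ((WithLp.equiv 2 (Fin n → ℝ)).symm a)
      ((WithLp.equiv 2 (Fin n → ℝ)).symm b)
  rw [← enorm_eq_norm, ← enorm_eq_norm] at h
  convert h using 2
  simp [dotProduct, PiLp.inner_apply, mul_comm]

/-- Bound on `|Z_n|` where
`Z_n = 2γ_n (v̂ᵀUUᵀA_n v̂ - ‖Uᵀv̂‖² v̂ᵀA_n v̂)` and `Φ = 1 - ‖Uᵀv̂‖²`. -/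
theorem stmt_1 (d k : ℕ) (U : Matrix (Fin d) (Fin k) ℝ)
    (A : Matrix (Fin d) (Fin d) ℝ) (v : Fin d → ℝ) (γ : ℝ)
    (hU : Uᵀ * U = 1) (hv : vecEnorm v = 1) (hA : spec A ≤ 1) (hγ : 0 < γ) :
    |2 * γ * (v ⬝ᵥ (U * Uᵀ * A).mulVec v
        - (vecEnorm (Uᵀ.mulVec v)) ^ 2 * (v ⬝ᵥ A.mulVec v))|
      ≤ 2 * γ * Real.sqrt (1 - (vecEnorm (Uᵀ.mulVec v)) ^ 2) := by
  set t : ℝ := (vecEnorm (Uᵀ.mulVec v)) ^ 2 with ht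
  set P : Matrix (Fin d) (Fin d) ℝ := U * Uᵀ with hP
  have hvv : v ⬝ᵥ v = 1 := by rw [← enorm_sq, hv]; norm_num
  have hPsymm : Pᵀ = P := by rw [hP, transpose_mul, transpose_transpose]
  have hPidem : P * P = P := by
    rw [hP, Matrix.mul_assoc, ← Matrix.mul_assoc Uᵀ U Uᵀ, hU, Matrix.one_mul]
  have htv : t = v ⬝ᵥ P.mulVec v := by
    rw [ht, enorm_sq, hP, ← mulVec_mulVec, dotProduct_mulVec v U,
      mulVec_transpose]
  have hPP : P.mulVec v ⬝ᵥ P.mulVec v = t := by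
    rw [dotProduct_mulVec, ← mulVec_transpose, hPsymm, mulVec_mulVec, hPidem,
      dotProduct_comm]
    exact htv.symm
  -- the key rewrite
  have key : v ⬝ᵥ (P * A).mulVec v - t * (v ⬝ᵥ A.mulVec v)
      = (P.mulVec v - t • v) ⬝ᵥ A.mulVec v := by
    rw [← mulVec_mulVec, dotProduct_mulVec v P, ← mulVec_transpose, hPsymm,
      sub_dotProduct, smul_dotProduct, smul_eq_mul]
  -- norm of the difference
  have hdiff : vecEnorm (P.mulVec v - t • v) ^ 2 = t - t ^ 2 := by
    rw [enorm_sq, sub_dotProduct, dotProduct_sub, dotProduct_sub,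
      smul_dotProduct, smul_dotProduct, dotProduct_smul, dotProduct_smul,
      hPP, hvv]
    simp only [smul_eq_mul]
    have h1 : v ⬝ᵥ P.mulVec v = t := htv.symm
    have h2 : P.mulVec v ⬝ᵥ v = t := by rw [dotProduct_comm, h1]
    rw [h1, h2]; ring
  have hdiff_le : vecEnorm (P.mulVec v - t • v) ≤ Real.sqrt (1 - t) := by
    have h0 : vecEnorm (P.mulVec v - t • v) = Real.sqrt (t - t ^ 2) := by
      rw [← hdiff, Real.sqrt_sq (my_enorm_nonneg _)]
    rw [h0]
    exact Real.sqrt_le_sqrt (by nlinarith [sq_nonneg (1 - t)])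
  -- ‖A v‖ ≤ 1
  have hAv : vecEnorm (A.mulVec v) ≤ 1 := by
    have h := (LinearMap.toContinuousLinearMap
        (Matrix.toEuclideanLin A)).le_opNorm ((WithLp.equiv 2 (Fin d → ℝ)).symm v)
    rw [← enorm_eq_norm] at h
    simp only [LinearMap.coe_toContinuousLinearMap', WithLp.equiv_symm_apply,
      Matrix.toEuclideanLin_apply_piLp_toLp, ← enorm_eq_norm] at h
    calc vecEnorm (A.mulVec v) ≤ spec A * vecEnorm v := by rw [enorm_eq_norm (A.mulVec v)]; exact h
      _ ≤ 1 := by rw [hv, mul_one]; exact hA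
  have hmain : |v ⬝ᵥ (P * A).mulVec v - t * (v ⬝ᵥ A.mulVec v)|
      ≤ Real.sqrt (1 - t) := by
    rw [key]
    calc |(P.mulVec v - t • v) ⬝ᵥ A.mulVec v|
        ≤ vecEnorm (P.mulVec v - t • v) * vecEnorm (A.mulVec v) := abs_dot_le _ _
      _ ≤ Real.sqrt (1 - t) * 1 :=
          mul_le_mul hdiff_le hAv (my_enorm_nonneg _) (Real.sqrt_nonneg _)
      _ = Real.sqrt (1 - t) := mul_one _
  rw [abs_mul, abs_of_pos (by linarith : (0:ℝ) < 2 * γ)]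
  exact mul_le_mul_of_nonneg_left hmain (by linarith)
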